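/- Let K be an A-field and Υ a triangular t-module of dimension n over K with diagonal Drinfeld modules ψ_1,…,ψ_n of ranks r_1,…,r_n satisfying r_1 < r_2 < ⋯ < r_n. Then there exists a lower triangular matrix V ∈ Mat_n(K{τ}) with all diagonal entries equal to 1 such that V·Υ_t·V^{−1} is lower triangular with the same diagonal entries, and for all i < j the entry of V·Υ_t·V^{−1} in the row of ψ_i and the column of ψ_j has τ-degree strictly smaller than r_j (the rank of the Drinfeld module occupying the diagonal position of its column); in particular Υ allows for low-degree biderivations and no field extension is needed. -/

import Mathlib

open Polynomial Matrix Finset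

noncomputable section

/-- Twisted ("skew") multiplication of polynomials in `τ`, determined by the rule
`τ · c = c^q · τ`:  `(Σᵢ aᵢτ^i) · (Σⱼ bⱼτ^j) = Σ_{i,j} aᵢ bⱼ^(q^i) τ^(i+j)`. -/
def twMul {K : Type*} [Field K] (q : ℕ) (f g : Polynomial K) : Polynomial K :=
  f.sum fun i a => g.sum fun j b => Polynomial.C (a * b ^ q ^ i) * Polynomial.X ^ (i + j)

/-- Twisted multiplication of matrices over the twisted polynomial ring `K{τ}`. -/
def twMatMul {K : Type*} [Field K] (q : ℕ) {α β γ : Type*} [Fintype β]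
    (A : Matrix α β (Polynomial K)) (B : Matrix β γ (Polynomial K)) :
    Matrix α γ (Polynomial K) :=
  Matrix.of fun i k => ∑ j, twMul q (A i j) (B j k)

/-- `ψ` is (the value at `t` of) a Drinfeld module of rank `r` over the `A`-field `(K, θ)`. -/
def IsDrinfeld {K : Type*} [Field K] (θ : K) (r : ℕ) (ψ : Polynomial K) : Prop :=
  1 ≤ r ∧ ψ.coeff 0 = θ ∧ ψ.natDegree = r ∧ ψ.coeff r ≠ 0

/-- `Υ` is (the value at `t` of) a triangular t-module of dimension `n` with diagonal
Drinfeld modules `ψ 0 = ψ₁, …, ψ (n-1) = ψₙ` of ranks `r 0, …, r (n-1)`:  `Υ` is lower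
triangular and its `(k,k)` diagonal entry is `ψ k.rev` (so `ψₙ` is top-left and
`ψ₁` is bottom-right). -/
def IsTriangular {K : Type*} [Field K] (θ : K) {n : ℕ}
    (Υ : Matrix (Fin n) (Fin n) (Polynomial K))
    (ψ : Fin n → Polynomial K) (r : Fin n → ℕ) : Prop :=
  (∀ i j : Fin n, i < j → Υ i j = 0) ∧
  (∀ k : Fin n, Υ k k = ψ k.rev) ∧
  (∀ i : Fin n, IsDrinfeld θ (r i) (ψ i))

set_option linter.unusedSectionVars false

namespace TwAux

variable {K : Type*} [Field K]

theorem twMul_def (q : ℕ) (f g : K[X]) :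
    twMul q f g = f.sum fun i a => g.sum fun j b => C (a * b ^ q ^ i) * X ^ (i + j) := rfl

theorem zero_twMul (q : ℕ) (g : K[X]) : twMul q 0 g = 0 := Polynomial.sum_zero_index _

theorem twMul_zero (q : ℕ) (f : K[X]) : twMul q f 0 = 0 := by
  simp [twMul, Polynomial.sum_zero_index, Polynomial.sum_def]

theorem add_twMul (q : ℕ) (f f' g : K[X]) :
    twMul q (f + f') g = twMul q f g + twMul q f' g := by
  unfold twMul
  refine Polynomial.sum_add_index _ _ _ (fun i => ?_) (fun i b₁ b₂ => ?_)
  · simp [Polynomial.sum_def]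
  · rw [← Polynomial.sum_add]
    congr 1; funext j b
    rw [add_mul, C_add, add_mul]

theorem twMul_monomial_left (q m : ℕ) (c : K) (g : K[X]) :
    twMul q (monomial m c) g = g.sum fun j b => C (c * b ^ q ^ m) * X ^ (m + j) :=
  Polynomial.sum_monomial_index _ _ (by simp [Polynomial.sum_def])

theorem one_twMul (q : ℕ) (g : K[X]) : twMul q 1 g = g := by
  rw [twMul_def, ← C_1, Polynomial.sum_C_index (by simp [Polynomial.sum_def])]
  simp only [one_mul, pow_zero, pow_one, zero_add]
  exact Polynomial.sum_C_mul_X_pow_eq g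

theorem twMul_one {q : ℕ} (hq0 : q ≠ 0) (f : K[X]) : twMul q f 1 = f := by
  rw [twMul_def]
  have inner : ∀ i (a : K),
      (1 : K[X]).sum (fun j b => C (a * b ^ q ^ i) * X ^ (i + j)) = C a * X ^ i := by
    intro i a
    rw [← C_1, Polynomial.sum_C_index
      (by rw [zero_pow (pow_ne_zero i hq0), mul_zero, C_0, zero_mul])]
    rw [one_pow, mul_one, add_zero]
  simp only [inner]
  exact Polynomial.sum_C_mul_X_pow_eq f

theorem finsetSum_twMul (q : ℕ) {ι : Type*} (s : Finset ι) (f : ι → K[X]) (g : K[X]) :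
    twMul q (∑ i ∈ s, f i) g = ∑ i ∈ s, twMul q (f i) g := by
  classical
  induction s using Finset.induction_on with
  | empty => simp [zero_twMul]
  | @insert a s ha ih => rw [Finset.sum_insert ha, add_twMul, ih, Finset.sum_insert ha]


def Amap (q : ℕ) : K[X] →+ K[X] where
  toFun h := h.sum fun i a => monomial (q ^ i) a
  map_zero' := Polynomial.sum_zero_index _
  map_add' f g := Polynomial.sum_add_index _ _ _ (by simp) (by simp)

theorem Amap_apply (q : ℕ) (h : K[X]) :
    Amap q h = h.sum fun i a => monomial (q ^ i) a := rfl

theorem Amap_monomial (q n : ℕ) (a : K) :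
    Amap q (monomial n a) = monomial (q ^ n) a :=
  Polynomial.sum_monomial_index _ _ (by simp)

theorem coeff_Amap {q : ℕ} (hq2 : 2 ≤ q) (f : K[X]) (k : ℕ) :
    (Amap q f).coeff (q ^ k) = f.coeff k := by
  rw [Amap_apply, Polynomial.sum_def, Polynomial.finset_sum_coeff]
  have h1 : ∀ i ∈ f.support,
      ((monomial (q ^ i)) (f.coeff i)).coeff (q ^ k)
        = if i = k then f.coeff i else 0 := by
    intro i _
    rw [Polynomial.coeff_monomial]
    by_cases h : i = k
    · subst h; simp
    · rw [if_neg (fun hc => h (Nat.pow_right_injective hq2 hc)), if_neg h]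
  rw [Finset.sum_congr rfl h1, Finset.sum_ite_eq' f.support k _]
  by_cases hk : k ∈ f.support
  · rw [if_pos hk]
  · rw [if_neg hk, Polynomial.notMem_support_iff.1 hk]

theorem Amap_injective {q : ℕ} (hq2 : 2 ≤ q) :
    Function.Injective (Amap (K := K) q) := fun f g h =>
  Polynomial.ext fun k => by rw [← coeff_Amap hq2 f k, ← coeff_Amap hq2 g k, h]

theorem natDegree_twMul_le (q : ℕ) (f g : K[X]) :
    (twMul q f g).natDegree ≤ f.natDegree + g.natDegree := by
  rw [twMul_def, Polynomial.sum_def]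
  refine Polynomial.natDegree_sum_le_of_forall_le _ _ fun i hi => ?_
  rw [Polynomial.sum_def]
  refine Polynomial.natDegree_sum_le_of_forall_le _ _ fun j hj => ?_
  refine (Polynomial.natDegree_C_mul_X_pow_le _ _).trans ?_
  exact add_le_add (Polynomial.le_natDegree_of_mem_supp i hi)
    (Polynomial.le_natDegree_of_mem_supp j hj)

theorem natDegree_twMul_monomial_left (q m : ℕ) (c : K) (g : K[X]) :
    (twMul q (monomial m c) g).natDegree ≤ m + g.natDegree :=
  (natDegree_twMul_le q _ g).trans
    (Nat.add_le_add_right (Polynomial.natDegree_monomial_le c) _)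

theorem coeff_twMul_monomial_left {q : ℕ} (hq0 : q ≠ 0) (m : ℕ) (c : K) (g : K[X])
    (k : ℕ) : (twMul q (monomial m c) g).coeff (m + k) = c * g.coeff k ^ q ^ m := by
  rw [twMul_monomial_left, Polynomial.sum_def, Polynomial.finset_sum_coeff]
  have h1 : ∀ j ∈ g.support,
      (C (c * g.coeff j ^ q ^ m) * X ^ (m + j)).coeff (m + k)
        = if k = j then c * g.coeff j ^ q ^ m else 0 := by
    intro j _
    rw [Polynomial.coeff_C_mul, Polynomial.coeff_X_pow]
    by_cases h : k = j
    · subst h; simp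
    · rw [if_neg (fun hc : m + k = m + j => h (by omega)), if_neg h, mul_zero]
  rw [Finset.sum_congr rfl h1, Finset.sum_ite_eq g.support k _]
  by_cases hk : k ∈ g.support
  · rw [if_pos hk]
  · rw [if_neg hk, Polynomial.notMem_support_iff.1 hk,
      zero_pow (pow_ne_zero m hq0), mul_zero]

section Char

variable (p s q : ℕ) [Fact p.Prime] [CharP K p]

theorem qpow (hq : q = p ^ s) (i : ℕ) : q ^ i = p ^ (s * i) := by rw [hq, pow_mul]

theorem add_pow_q (hq : q = p ^ s) (i : ℕ) (x y : K) :
    (x + y) ^ q ^ i = x ^ q ^ i + y ^ q ^ i := by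
  rw [qpow p s q hq i]; exact add_pow_char_pow x y p (s * i)

theorem twMul_add (hq : q = p ^ s) (f g g' : K[X]) :
    twMul q f (g + g') = twMul q f g + twMul q f g' := by
  have hq0 : q ≠ 0 := by rw [hq]; exact pow_ne_zero s (Nat.Prime.ne_zero Fact.out)
  have key : ∀ i (a : K), ((g + g').sum fun j b => C (a * b ^ q ^ i) * X ^ (i + j))
      = (g.sum fun j b => C (a * b ^ q ^ i) * X ^ (i + j))
      + (g'.sum fun j b => C (a * b ^ q ^ i) * X ^ (i + j)) := by
    intro i a
    refine Polynomial.sum_add_index _ _ _ (fun j => ?_) (fun j b₁ b₂ => ?_)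
    · rw [zero_pow (pow_ne_zero i hq0), mul_zero, C_0, zero_mul]
    · rw [add_pow_q p s q hq, mul_add, C_add, add_mul]
  rw [twMul_def, twMul_def, twMul_def, ← Polynomial.sum_add]
  congr 1; funext i a; exact key i a

theorem neg_twMul (q : ℕ) (f g : K[X]) : twMul q (-f) g = - twMul q f g := by
  have := add_twMul q f (-f) g
  rw [add_neg_cancel, zero_twMul] at this
  have h2 := this.symm
  rw [add_comm] at h2
  exact eq_neg_of_add_eq_zero_left h2

theorem Amap_twMul (hq : q = p ^ s) (f g : K[X]) :
    Amap q (twMul q f g) = (Amap q f).comp (Amap q g) := by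
  induction f using Polynomial.induction_on' with
  | add f₁ f₂ h₁ h₂ =>
    rw [add_twMul, map_add, map_add, Polynomial.add_comp, h₁, h₂]
  | monomial i a =>
    rw [twMul_monomial_left, Amap_monomial, ← C_mul_X_pow_eq_monomial,
      Polynomial.mul_comp, Polynomial.C_comp, Polynomial.X_pow_comp,
      Polynomial.sum_def, map_sum, Amap_apply q g, Polynomial.sum_def]
    have hpow : ((∑ j ∈ g.support, (monomial (q ^ j)) (g.coeff j) : K[X])) ^ q ^ i
        = ∑ j ∈ g.support, ((monomial (q ^ j)) (g.coeff j) : K[X]) ^ q ^ i := by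
      rw [qpow p s q hq i]
      have h1 : ∀ u : K[X], u ^ p ^ (s * i) = iterateFrobenius K[X] p (s * i) u :=
        fun u => (iterateFrobenius_def p (s * i) u).symm
      rw [h1, map_sum]
      exact Finset.sum_congr rfl fun j _ => (h1 _).symm
    rw [hpow, Finset.mul_sum]
    refine Finset.sum_congr rfl fun j hj => ?_
    rw [C_mul_X_pow_eq_monomial, Amap_monomial, Polynomial.monomial_pow,
      Polynomial.C_mul_monomial]
    congr 1
    rw [pow_add, mul_comm]

theorem twMul_assoc (hq : q = p ^ s) (hq2 : 2 ≤ q) (f g h : K[X]) :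
    twMul q (twMul q f g) h = twMul q f (twMul q g h) := by
  apply Amap_injective hq2
  rw [Amap_twMul p s q hq, Amap_twMul p s q hq, Amap_twMul p s q hq,
    Amap_twMul p s q hq, Polynomial.comp_assoc]

theorem twMul_neg (hq : q = p ^ s) (f g : K[X]) :
    twMul q f (-g) = - twMul q f g := by
  have := twMul_add p s q hq f g (-g)
  rw [add_neg_cancel, twMul_zero] at this
  have h2 := this.symm
  rw [add_comm] at h2
  exact eq_neg_of_add_eq_zero_left h2

theorem twMul_finsetSum (hq : q = p ^ s) {ι : Type*} (t : Finset ι)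
    (f : K[X]) (g : ι → K[X]) :
    twMul q f (∑ i ∈ t, g i) = ∑ i ∈ t, twMul q f (g i) := by
  classical
  induction t using Finset.induction_on with
  | empty => simp [twMul_zero]
  | @insert a t ha ih =>
    rw [Finset.sum_insert ha, twMul_add p s q hq, ih, Finset.sum_insert ha]

end Char

section Mat

variable (p s q : ℕ) [Fact p.Prime] [CharP K p] {n : ℕ}

theorem twMatMul_apply (A B : Matrix (Fin n) (Fin n) K[X]) (i j : Fin n) :
    twMatMul q A B i j = ∑ k, twMul q (A i k) (B k j) := rfl

theorem twMatMul_one {q : ℕ} (hq0 : q ≠ 0) (A : Matrix (Fin n) (Fin n) K[X]) :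
    twMatMul q A 1 = A := by
  ext i j
  rw [twMatMul_apply, Finset.sum_eq_single j]
  · rw [Matrix.one_apply_eq, twMul_one hq0]
  · intro k _ hk
    rw [Matrix.one_apply_ne hk, twMul_zero]
  · simp

theorem one_twMatMul (q : ℕ) (A : Matrix (Fin n) (Fin n) K[X]) :
    twMatMul q 1 A = A := by
  ext i j
  rw [twMatMul_apply, Finset.sum_eq_single i]
  · rw [Matrix.one_apply_eq, one_twMul]
  · intro k _ hk
    rw [Matrix.one_apply_ne (Ne.symm hk), zero_twMul]
  · simp

theorem add_twMatMul (q : ℕ) (A B C : Matrix (Fin n) (Fin n) K[X]) :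
    twMatMul q (A + B) C = twMatMul q A C + twMatMul q B C := by
  ext i j
  simp only [twMatMul_apply, Matrix.add_apply, add_twMul, Finset.sum_add_distrib]

theorem twMatMul_add (hq : q = p ^ s) (A B C : Matrix (Fin n) (Fin n) K[X]) :
    twMatMul q A (B + C) = twMatMul q A B + twMatMul q A C := by
  ext i j
  simp only [twMatMul_apply, Matrix.add_apply, twMul_add p s q hq,
    Finset.sum_add_distrib]

theorem stdBasis_twMatMul (a b : Fin n) (v : K[X]) (M : Matrix (Fin n) (Fin n) K[X])
    (i j : Fin n) :
    twMatMul q (Matrix.single a b v) M i j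
      = if i = a then twMul q v (M b j) else 0 := by
  rw [twMatMul_apply]
  by_cases h : i = a
  · subst h
    rw [if_pos rfl, Finset.sum_eq_single b]
    · rw [Matrix.single_apply_same]
    · intro k _ hk
      have : Matrix.single i b v i k = 0 := by
        simp [Matrix.single, Ne.symm hk]
      rw [this, zero_twMul]
    · simp
  · rw [if_neg h]
    refine Finset.sum_eq_zero fun k _ => ?_
    have : Matrix.single a b v i k = 0 := by
      simp only [Matrix.single, Matrix.of_apply, ite_eq_right_iff, and_imp]
      intro h1 _
      exact absurd h1.symm h
    rw [this, zero_twMul]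

theorem twMatMul_stdBasis (a b : Fin n) (v : K[X]) (M : Matrix (Fin n) (Fin n) K[X])
    (i j : Fin n) :
    twMatMul q M (Matrix.single a b v) i j
      = if j = b then twMul q (M i a) v else 0 := by
  rw [twMatMul_apply]
  by_cases h : j = b
  · subst h
    rw [if_pos rfl, Finset.sum_eq_single a]
    · rw [Matrix.single_apply_same]
    · intro k _ hk
      have : Matrix.single a j v k j = 0 := by
        simp [Matrix.single, Ne.symm hk]
      rw [this, twMul_zero]
    · simp
  · rw [if_neg h]
    refine Finset.sum_eq_zero fun k _ => ?_
    have : Matrix.single a b v k j = 0 := by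
      simp only [Matrix.single, Matrix.of_apply, ite_eq_right_iff, and_imp]
      intro _ h2
      exact absurd h2.symm h
    rw [this, twMul_zero]

theorem twMatMul_assoc (hq : q = p ^ s) (hq2 : 2 ≤ q)
    (A B C : Matrix (Fin n) (Fin n) K[X]) :
    twMatMul q (twMatMul q A B) C = twMatMul q A (twMatMul q B C) := by
  refine Matrix.ext fun i l => ?_
  rw [twMatMul_apply, twMatMul_apply]
  calc ∑ k, twMul q (twMatMul q A B i k) (C k l)
      = ∑ k, ∑ j, twMul q (twMul q (A i j) (B j k)) (C k l) := by
        refine Finset.sum_congr rfl fun k _ => ?_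
        rw [twMatMul_apply]
        exact finsetSum_twMul q _ _ _
    _ = ∑ j, ∑ k, twMul q (A i j) (twMul q (B j k) (C k l)) := by
        rw [Finset.sum_comm]
        exact Finset.sum_congr rfl fun j _ => Finset.sum_congr rfl fun k _ =>
          twMul_assoc p s q hq hq2 _ _ _
    _ = ∑ j, twMul q (A i j) (twMatMul q B C j l) := by
        refine Finset.sum_congr rfl fun j _ => ?_
        rw [twMatMul_apply, twMul_finsetSum p s q hq]

end Mat

section Main

variable (p s q : ℕ) [Fact p.Prime] [CharP K p] {n : ℕ}

def LowUni (V : Matrix (Fin n) (Fin n) K[X]) : Prop :=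
  (∀ i j : Fin n, i < j → V i j = 0) ∧ ∀ k, V k k = 1

theorem LowUni_one : LowUni (1 : Matrix (Fin n) (Fin n) K[X]) :=
  ⟨fun _ _ hij => Matrix.one_apply_ne (ne_of_lt hij), fun _ => Matrix.one_apply_eq _⟩

theorem LowUni_mul {q : ℕ} (hq0 : q ≠ 0) {A B : Matrix (Fin n) (Fin n) K[X]}
    (hA : LowUni A) (hB : LowUni B) : LowUni (twMatMul q A B) := by
  constructor
  · intro i j hij
    rw [twMatMul_apply]
    refine Finset.sum_eq_zero fun k _ => ?_
    rcases le_or_gt k i with h | h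
    · rw [hB.1 k j (lt_of_le_of_lt h hij), twMul_zero]
    · rw [hA.1 i k h, zero_twMul]
  · intro k
    rw [twMatMul_apply, Finset.sum_eq_single k]
    · rw [hA.2 k, hB.2 k, one_twMul]
    · intro l _ hl
      rcases lt_or_gt_of_ne hl with h | h
      · rw [hB.1 l k h, twMul_zero]
      · rw [hA.1 k l h, zero_twMul]
    · simp

theorem stdBasis_ne (a b i j : Fin n) (v : K[X]) (h : ¬(a = i ∧ b = j)) :
    Matrix.single a b v i j = 0 := by
  simp only [Matrix.single, Matrix.of_apply, if_neg h]

theorem E_LowUni (a b : Fin n) (hba : b < a) (v : K[X]) :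
    LowUni (1 + Matrix.single a b v) := by
  constructor
  · intro i j hij
    have hz : Matrix.single a b v i j = 0 := stdBasis_ne _ _ _ _ _
      (by rintro ⟨rfl, rfl⟩; exact absurd hij (not_lt.2 hba.le))
    rw [Matrix.add_apply, Matrix.one_apply_ne (ne_of_lt hij), hz, add_zero]
  · intro k
    have hz : Matrix.single a b v k k = 0 := stdBasis_ne _ _ _ _ _
      (by rintro ⟨rfl, rfl⟩; exact lt_irrefl _ hba)
    rw [Matrix.add_apply, Matrix.one_apply_eq, hz, add_zero]

theorem E_inv (hq : q = p ^ s) (a b : Fin n) (hab : a ≠ b) (v w : K[X])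
    (hvw : v + w = 0) :
    twMatMul q (1 + Matrix.single a b v) (1 + Matrix.single a b w) = 1 := by
  have hq0 : q ≠ 0 := by rw [hq]; exact pow_ne_zero s (Nat.Prime.ne_zero Fact.out)
  have hSS : twMatMul q (Matrix.single a b v) (Matrix.single a b w) = 0 := by
    refine Matrix.ext fun i j => ?_
    rw [stdBasis_twMatMul]
    have h1 : Matrix.single a b w b j = 0 :=
      stdBasis_ne _ _ _ _ _ (fun hc => hab hc.1)
    rw [h1, twMul_zero, ite_self, Matrix.zero_apply]
  have hwv : w + v = 0 := by rw [add_comm]; exact hvw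
  rw [add_twMatMul, one_twMatMul, twMatMul_add p s q hq, twMatMul_one hq0, hSS,
    add_zero, add_assoc, ← Matrix.single_add, hwv, Matrix.single_zero, add_zero]

theorem conj_apply (hq : q = p ^ s) (a b : Fin n) (v : K[X])
    (Υ' : Matrix (Fin n) (Fin n) K[X]) (hba0 : Υ' b a = 0) (i j : Fin n) :
    twMatMul q (twMatMul q (1 + Matrix.single a b v) Υ') (1 + Matrix.single a b (-v)) i j
      = Υ' i j + (if i = a then twMul q v (Υ' b j) else 0)
        + (if j = b then twMul q (Υ' i a) (-v) else 0) := by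
  have hq0 : q ≠ 0 := by rw [hq]; exact pow_ne_zero s (Nat.Prime.ne_zero Fact.out)
  set S := Matrix.single a b v with hS
  set S' := Matrix.single a b (-v) with hS'
  have h1 : twMatMul q (1 + S) Υ' = Υ' + twMatMul q S Υ' := by
    rw [add_twMatMul, one_twMatMul]
  have h2 : twMatMul q (Υ' + twMatMul q S Υ') (1 + S')
      = (Υ' + twMatMul q S Υ') + (twMatMul q Υ' S' + twMatMul q (twMatMul q S Υ') S') := by
    rw [twMatMul_add p s q hq, twMatMul_one hq0, add_twMatMul]
  have h3 : twMatMul q (twMatMul q S Υ') S' i j = 0 := by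
    rw [twMatMul_stdBasis]
    have h4 : twMatMul q S Υ' i a = 0 := by
      rw [stdBasis_twMatMul, hba0, twMul_zero, ite_self]
    rw [h4, zero_twMul, ite_self]
  rw [h1, h2]
  simp only [Matrix.add_apply]
  rw [h3, add_zero, stdBasis_twMatMul, twMatMul_stdBasis, add_assoc]

def Inv (q : ℕ) (Υ : Matrix (Fin n) (Fin n) K[X]) (ψ : Fin n → K[X])
    (Υ' V W : Matrix (Fin n) (Fin n) K[X]) : Prop :=
  LowUni V ∧ twMatMul q V W = 1 ∧ twMatMul q W V = 1 ∧
  Υ' = twMatMul q (twMatMul q V Υ) W ∧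
  (∀ i j : Fin n, i < j → Υ' i j = 0) ∧ (∀ k, Υ' k k = ψ k.rev)

theorem Inv_comp (hq : q = p ^ s) (hq2 : 2 ≤ q)
    {Υ : Matrix (Fin n) (Fin n) K[X]} {ψ : Fin n → K[X]}
    {Υ' V W E E' : Matrix (Fin n) (Fin n) K[X]}
    (hInv : Inv q Υ ψ Υ' V W) (hEuni : LowUni E)
    (hEE' : twMatMul q E E' = 1) (hE'E : twMatMul q E' E = 1)
    (htri'' : ∀ i j : Fin n, i < j → twMatMul q (twMatMul q E Υ') E' i j = 0)
    (hdiag'' : ∀ k, twMatMul q (twMatMul q E Υ') E' k k = ψ k.rev) :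
    Inv q Υ ψ (twMatMul q (twMatMul q E Υ') E') (twMatMul q E V) (twMatMul q W E') := by
  have hq0 : q ≠ 0 := by rw [hq]; exact pow_ne_zero s (Nat.Prime.ne_zero Fact.out)
  obtain ⟨hV, hVW, hWV, heq, _, _⟩ := hInv
  refine ⟨LowUni_mul hq0 hEuni hV, ?_, ?_, ?_, htri'', hdiag''⟩
  · rw [twMatMul_assoc p s q hq hq2, ← twMatMul_assoc p s q hq hq2 V W E',
      hVW, one_twMatMul, hEE']
  · rw [twMatMul_assoc p s q hq hq2, ← twMatMul_assoc p s q hq hq2 E' E V,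
      hE'E, one_twMatMul, hWV]
  · rw [heq, ← twMatMul_assoc p s q hq hq2 E (twMatMul q V Υ) W,
      ← twMatMul_assoc p s q hq hq2 E V Υ,
      twMatMul_assoc p s q hq hq2 (twMatMul q (twMatMul q E V) Υ) W E']

theorem stepA (hq : q = p ^ s) (hq2 : 2 ≤ q) (θ : K)
    {Υ : Matrix (Fin n) (Fin n) K[X]} {ψ : Fin n → K[X]} {r : Fin n → ℕ}
    (hdrin : ∀ i, IsDrinfeld θ (r i) (ψ i))
    {a b : Fin n} (hba : b < a) (hmono' : r a.rev < r b.rev)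
    {Υ' V W : Matrix (Fin n) (Fin n) K[X]} (hInv : Inv q Υ ψ Υ' V W)
    (hge : r b.rev ≤ (Υ' a b).natDegree) :
    ∃ Υ'' V'' W'', Inv q Υ ψ Υ'' V'' W'' ∧
      (∀ i j : Fin n, (b < j ∨ (j = b ∧ i < a)) → Υ'' i j = Υ' i j) ∧
      (Υ'' a b).natDegree < (Υ' a b).natDegree := by
  have hq0 : q ≠ 0 := by rw [hq]; exact pow_ne_zero s (Nat.Prime.ne_zero Fact.out)
  obtain ⟨hV, hVW, hWV, hΥ'eq, htri, hdiag⟩ := hInv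
  set d := (Υ' a b).natDegree with hd
  set rB := r b.rev with hrB
  set m := d - rB with hm
  have hmd : m + rB = d := by omega
  have hL : (ψ b.rev).coeff rB ≠ 0 := (hdrin b.rev).2.2.2
  have hLq : (ψ b.rev).coeff rB ^ q ^ m ≠ 0 := pow_ne_zero _ hL
  set c := -((Υ' a b).coeff d) / ((ψ b.rev).coeff rB ^ q ^ m) with hc
  set v : K[X] := monomial m c with hv
  set E := (1 : Matrix (Fin n) (Fin n) K[X]) + Matrix.single a b v with hE
  set E' := (1 : Matrix (Fin n) (Fin n) K[X]) + Matrix.single a b (-v) with hE'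
  set Υ'' := twMatMul q (twMatMul q E Υ') E' with hΥ''
  have hba0 : Υ' b a = 0 := htri b a hba
  have hconj : ∀ i j : Fin n, Υ'' i j = Υ' i j
      + (if i = a then twMul q v (Υ' b j) else 0)
      + (if j = b then twMul q (Υ' i a) (-v) else 0) :=
    fun i j => conj_apply p s q hq a b v Υ' hba0 i j
  have htri'' : ∀ i j : Fin n, i < j → Υ'' i j = 0 := by
    intro i j hij
    have h1 : (if i = a then twMul q v (Υ' b j) else 0) = 0 := by
      by_cases h : i = a
      · subst h; rw [if_pos rfl, htri b j (hba.trans hij), twMul_zero]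
      · rw [if_neg h]
    have h2 : (if j = b then twMul q (Υ' i a) (-v) else 0) = 0 := by
      by_cases h : j = b
      · subst h; rw [if_pos rfl, htri i a (hij.trans hba), zero_twMul]
      · rw [if_neg h]
    rw [hconj i j, htri i j hij, h1, h2, add_zero, add_zero]
  have hdiag'' : ∀ k, Υ'' k k = ψ k.rev := by
    intro k
    have h1 : (if k = a then twMul q v (Υ' b k) else 0) = 0 := by
      by_cases h : k = a
      · subst h; rw [if_pos rfl, hba0, twMul_zero]
      · rw [if_neg h]
    have h2 : (if k = b then twMul q (Υ' k a) (-v) else 0) = 0 := by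
      by_cases h : k = b
      · subst h; rw [if_pos rfl, hba0, zero_twMul]
      · rw [if_neg h]
    rw [hconj k k, h1, h2, add_zero, add_zero, hdiag k]
  have hunch : ∀ i j : Fin n, (b < j ∨ (j = b ∧ i < a)) → Υ'' i j = Υ' i j := by
    intro i j hcase
    rcases hcase with hbj | ⟨hjb, hia⟩
    · have h1 : (if i = a then twMul q v (Υ' b j) else 0) = 0 := by
        by_cases h : i = a
        · subst h; rw [if_pos rfl, htri b j hbj, twMul_zero]
        · rw [if_neg h]
      have h2 : (if j = b then twMul q (Υ' i a) (-v) else 0) = 0 :=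
        if_neg (fun hjb : j = b => (lt_irrefl b (hjb ▸ hbj)))
      rw [hconj i j, h1, h2, add_zero, add_zero]
    · subst hjb
      have h1 : (if i = a then twMul q v (Υ' j j) else 0) = 0 :=
        if_neg (fun h : i = a => absurd (h ▸ hia) (lt_irrefl a))
      have h2 : twMul q (Υ' i a) (-v) = 0 := by rw [htri i a hia, zero_twMul]
      rw [hconj i j, h1, if_pos rfl, h2, add_zero, add_zero]
  have hrda : (Υ' a a).natDegree = r a.rev := by rw [hdiag a, (hdrin a.rev).2.2.1]
  have hone : 1 ≤ rB := (hdrin b.rev).1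
  have hcoeffs : ∀ k, d ≤ k → (Υ'' a b).coeff k = 0 := by
    intro k hk
    have h3 : (twMul q (Υ' a a) (-v)).coeff k = 0 := by
      apply Polynomial.coeff_eq_zero_of_natDegree_lt
      calc (twMul q (Υ' a a) (-v)).natDegree
          ≤ (Υ' a a).natDegree + (-v).natDegree := natDegree_twMul_le q _ _
        _ ≤ r a.rev + m := by
            rw [hrda, hv, Polynomial.natDegree_neg]
            exact Nat.add_le_add_left (Polynomial.natDegree_monomial_le c) _
        _ < k := by omega
    rw [hconj a b, if_pos rfl, if_pos rfl, hdiag b, Polynomial.coeff_add,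
      Polynomial.coeff_add, h3, add_zero]
    rcases eq_or_lt_of_le hk with heq | hlt
    · subst heq
      have h2 : (twMul q v (ψ b.rev)).coeff d = -((Υ' a b).coeff d) := by
        conv_lhs => rw [← hmd]
        rw [hv, coeff_twMul_monomial_left hq0, hc, div_mul_cancel₀ _ hLq]
      rw [h2, add_neg_cancel]
    · have h1 : (Υ' a b).coeff k = 0 :=
        Polynomial.coeff_eq_zero_of_natDegree_lt (by omega)
      have h2 : (twMul q v (ψ b.rev)).coeff k = 0 := by
        apply Polynomial.coeff_eq_zero_of_natDegree_lt
        calc (twMul q v (ψ b.rev)).natDegree ≤ m + (ψ b.rev).natDegree := by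
              rw [hv]; exact natDegree_twMul_monomial_left q m c _
          _ = m + rB := by rw [(hdrin b.rev).2.2.1]
          _ < k := by omega
      rw [h1, h2, add_zero]
  have hlt'' : (Υ'' a b).natDegree < d := by
    have hd1 : 1 ≤ d := le_trans hone hge
    by_cases h0 : Υ'' a b = 0
    · rw [h0, Polynomial.natDegree_zero]; omega
    · rw [Polynomial.natDegree_lt_iff_degree_lt h0]
      exact (Polynomial.degree_lt_iff_coeff_zero _ _).2 fun k hk => hcoeffs k hk
  have hEE' : twMatMul q E E' = 1 :=
    E_inv p s q hq a b hba.ne' v (-v) (add_neg_cancel v)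
  have hE'E : twMatMul q E' E = 1 :=
    E_inv p s q hq a b hba.ne' (-v) v (neg_add_cancel v)
  have hEuni : LowUni E := E_LowUni a b hba v
  exact ⟨Υ'', twMatMul q E V, twMatMul q W E',
    Inv_comp p s q hq hq2 ⟨hV, hVW, hWV, hΥ'eq, htri, hdiag⟩ hEuni hEE' hE'E htri'' hdiag'',
    hunch, hlt''⟩

theorem fixEntry (hq : q = p ^ s) (hq2 : 2 ≤ q) (θ : K)
    {Υ : Matrix (Fin n) (Fin n) K[X]} {ψ : Fin n → K[X]} {r : Fin n → ℕ}
    (hdrin : ∀ i, IsDrinfeld θ (r i) (ψ i))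
    {a b : Fin n} (hba : b < a) (hmono' : r a.rev < r b.rev) :
    ∀ d : ℕ, ∀ Υ' V W : Matrix (Fin n) (Fin n) K[X], Inv q Υ ψ Υ' V W →
      (Υ' a b).natDegree ≤ d →
    ∃ Υ'' V'' W'', Inv q Υ ψ Υ'' V'' W'' ∧
      (∀ i j : Fin n, (b < j ∨ (j = b ∧ i < a)) → Υ'' i j = Υ' i j) ∧
      (Υ'' a b).natDegree < r b.rev := by
  intro d
  induction d with
  | zero =>
    intro Υ' V W hInv hd
    have h1 : 1 ≤ r b.rev := (hdrin b.rev).1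
    exact ⟨Υ', V, W, hInv, fun _ _ _ => rfl, by omega⟩
  | succ d ih =>
    intro Υ' V W hInv hd
    by_cases hlt : (Υ' a b).natDegree < r b.rev
    · exact ⟨Υ', V, W, hInv, fun _ _ _ => rfl, hlt⟩
    · obtain ⟨Υ'', V'', W'', hInv'', hunch, hdeclt⟩ :=
        stepA p s q hq hq2 θ hdrin hba hmono' hInv (not_lt.1 hlt)
      obtain ⟨Υ₃, V₃, W₃, hInv₃, hunch₃, hfin⟩ :=
        ih Υ'' V'' W'' hInv'' (by omega)
      exact ⟨Υ₃, V₃, W₃, hInv₃,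
        fun i j h => (hunch₃ i j h).trans (hunch i j h), hfin⟩

theorem key_iff (i j a b : Fin n) :
    (j.rev : ℕ) * n + i < (b.rev : ℕ) * n + a ↔ (b < j ∨ (j = b ∧ i < a)) := by
  have hi : (i : ℕ) < n := i.is_lt
  have ha : (a : ℕ) < n := a.is_lt
  constructor
  · intro h
    rcases lt_trichotomy ((j.rev : ℕ)) ((b.rev : ℕ)) with h1 | h1 | h1
    · left
      exact Fin.rev_lt_rev.1 (by rwa [Fin.lt_def])
    · right
      have hjb : j = b := Fin.rev_inj.1 (Fin.ext h1)
      refine ⟨hjb, ?_⟩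
      subst hjb
      rw [h1] at h
      rw [Fin.lt_def]
      omega
    · exfalso
      have e2 : ((b.rev : ℕ)) * n + n ≤ ((j.rev : ℕ)) * n := by
        have := Nat.mul_le_mul_right n (Nat.succ_le_of_lt h1)
        rwa [Nat.succ_mul] at this
      omega
  · intro h
    rcases h with h | ⟨hjb, hia⟩
    · have h1 : (j.rev : ℕ) < (b.rev : ℕ) := by
        rw [← Fin.lt_def]; exact Fin.rev_lt_rev.2 h
      have e2 : ((j.rev : ℕ)) * n + n ≤ ((b.rev : ℕ)) * n := by
        have := Nat.mul_le_mul_right n (Nat.succ_le_of_lt h1)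
        rwa [Nat.succ_mul] at this
      omega
    · subst hjb
      have : (i : ℕ) < (a : ℕ) := hia
      omega

theorem key_eq {i j a b : Fin n}
    (h : (j.rev : ℕ) * n + i = (b.rev : ℕ) * n + a) : i = a ∧ j = b := by
  have hn1 : ¬((j.rev : ℕ) * n + i < (b.rev : ℕ) * n + a) := by omega
  have hn2 : ¬((b.rev : ℕ) * n + a < (j.rev : ℕ) * n + i) := by omega
  rw [key_iff] at hn1
  rw [key_iff] at hn2
  push_neg at hn1 hn2
  have hjb : j = b := le_antisymm hn1.1 hn2.1
  subst hjb
  exact ⟨le_antisymm (hn2.2 rfl) (hn1.2 rfl), rfl⟩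

theorem processAll (hq : q = p ^ s) (hq2 : 2 ≤ q) (θ : K)
    {Υ : Matrix (Fin n) (Fin n) K[X]} {ψ : Fin n → K[X]} {r : Fin n → ℕ}
    (hΥ : IsTriangular θ Υ ψ r)
    (hmono : ∀ i j : Fin n, i < j → r i < r j) :
    ∀ m : ℕ, ∃ Υ' V W, Inv q Υ ψ Υ' V W ∧
      ∀ i j : Fin n, j < i → (j.rev : ℕ) * n + i < m → (Υ' i j).natDegree < r j.rev := by
  have hq0 : q ≠ 0 := by rw [hq]; exact pow_ne_zero s (Nat.Prime.ne_zero Fact.out)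
  intro m
  induction m with
  | zero =>
    refine ⟨Υ, 1, 1, ⟨LowUni_one, twMatMul_one hq0 1, twMatMul_one hq0 1, ?_,
      hΥ.1, hΥ.2.1⟩, fun i j _ h => absurd h (Nat.not_lt_zero _)⟩
    rw [one_twMatMul, twMatMul_one hq0]
  | succ m ih =>
    obtain ⟨Υ', V, W, hInv, hdone⟩ := ih
    by_cases hex : ∃ a b : Fin n, b < a ∧ (b.rev : ℕ) * n + a = m
    · obtain ⟨a, b, hba, hkey⟩ := hex
      have hmono' : r a.rev < r b.rev := hmono _ _ (Fin.rev_lt_rev.2 hba)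
      obtain ⟨Υ'', V'', W'', hInv'', hunch, hfix⟩ :=
        fixEntry p s q hq hq2 θ hΥ.2.2 hba hmono' ((Υ' a b).natDegree) Υ' V W hInv le_rfl
      refine ⟨Υ'', V'', W'', hInv'', fun i j hji hlt => ?_⟩
      rcases Nat.lt_succ_iff_lt_or_eq.1 hlt with hlt' | heq
      · have hearlier : b < j ∨ (j = b ∧ i < a) := (key_iff i j a b).1 (by omega)
        rw [hunch i j hearlier]
        exact hdone i j hji hlt'
      · obtain ⟨hia, hjb⟩ := key_eq (heq.trans hkey.symm)
        subst hia; subst hjb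
        exact hfix
    · refine ⟨Υ', V, W, hInv, fun i j hji hlt => ?_⟩
      have hne : (j.rev : ℕ) * n + i ≠ m := fun hc => hex ⟨i, j, hji, hc⟩
      exact hdone i j hji (by omega)

end Main

end TwAux

/-- strictly increasing ranks: LD-biderivations over `K` itself.
If `r₁ < r₂ < ⋯ < rₙ`, then there is a lower triangular `V` over `K{τ}` with diagonal
entries `1` (with two-sided twisted inverse `W`) such that `V·Υ_t·V⁻¹` is lower
triangular with the same diagonal entries and every below-diagonal entry, lying in the
column whose diagonal position carries `ψⱼ`, has `τ`-degree strictly smaller than `rⱼ`;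
in particular `Υ` allows for low-degree biderivations and no field extension is needed. -/
theorem LD_biderivations_over_K
    {K : Type*} [Field K] (p s q : ℕ) [Fact p.Prime] (hs : 0 < s) (hq : q = p ^ s)
    [Algebra (GaloisField p s) K] (θ : K) {n : ℕ}
    (Υ : Matrix (Fin n) (Fin n) (Polynomial K))
    (ψ : Fin n → Polynomial K) (r : Fin n → ℕ)
    (hΥ : IsTriangular θ Υ ψ r)
    (hmono : ∀ i j : Fin n, i < j → r i < r j) :
    ∃ V W : Matrix (Fin n) (Fin n) (Polynomial K),
      (∀ i j : Fin n, i < j → V i j = 0) ∧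
      (∀ k : Fin n, V k k = 1) ∧
      twMatMul q V W = 1 ∧ twMatMul q W V = 1 ∧
      ∃ Υ' : Matrix (Fin n) (Fin n) (Polynomial K),
        Υ' = twMatMul q (twMatMul q V Υ) W ∧
        (∀ i j : Fin n, i < j → Υ' i j = 0) ∧
        (∀ k : Fin n, Υ' k k = ψ k.rev) ∧
        (∀ a b : Fin n, b < a → (Υ' a b).natDegree < r b.rev) := by
  haveI : CharP K p :=
    charP_of_injective_algebraMap (algebraMap (GaloisField p s) K).injective p
  have hq2 : 2 ≤ q := by
    rw [hq]; exact Nat.one_lt_pow hs.ne' (Fact.out : p.Prime).one_lt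
  obtain ⟨Υ', V, W, hInv, hdone⟩ := TwAux.processAll p s q hq hq2 θ hΥ hmono (n * n)
  obtain ⟨hV, hVW, hWV, heq, htri, hdiag⟩ := hInv
  refine ⟨V, W, hV.1, hV.2, hVW, hWV, Υ', heq, htri, hdiag, fun a b hba => ?_⟩
  apply hdone a b hba
  have h1 : ((b.rev : ℕ)) * n + n ≤ n * n := by
    have := Nat.mul_le_mul_right n (Nat.succ_le_of_lt b.rev.is_lt)
    rwa [Nat.succ_mul] at this
  have ha : (a : ℕ) < n := a.is_lt
  omega
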